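/- Let M be an R-module in which every nonzero submodule is second. Then for every submodule K of M and every ideal I of R, (K :_M I) = (K :_M I²). -/

import Mathlib

open Pointwise

variable {R : Type*} [CommRing R] {M : Type*} [AddCommGroup M] [Module R M]

/-- A submodule `S` is *second* if `S ≠ 0` and for every `r : R`, `r • S = S` or `r • S = 0`. -/
def IsSecondSubmodule (S : Submodule R M) : Prop :=
  S ≠ ⊥ ∧ ∀ r : R, r • S = S ∨ r • S = ⊥

/-- The submodule `(K :_M I) = {m : M | I • m ⊆ K}`. -/
def Submodule.mcolon (K : Submodule R M) (I : Ideal R) : Submodule R M where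
  carrier := {m : M | ∀ r ∈ I, r • m ∈ K}
  add_mem' := fun ha hb r hr => by
    simpa [smul_add] using K.add_mem (ha r hr) (hb r hr)
  zero_mem' := fun r hr => by simp
  smul_mem' := fun c a ha r hr => by
    rw [smul_comm]; exact K.smul_mem c (ha r hr)

theorem mcolon_sq_eq_mcolon
    (h : ∀ S : Submodule R M, S ≠ ⊥ → IsSecondSubmodule S)
    (K : Submodule R M) (I : Ideal R) :
    Submodule.mcolon K I = Submodule.mcolon K (I ^ 2) := by
  ext m
  constructor
  · intro hm r hr
    have : r ∈ I := Ideal.pow_le_self (n := 2) (by norm_num) hr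
    exact hm r this
  · intro hm r hr
    by_cases hm0 : m = 0
    · simp [hm0]
    · set S : Submodule R M := Submodule.span R {m} with hS
      have hSne : S ≠ ⊥ := by
        simp [hS, Submodule.span_singleton_eq_bot, hm0]
      rcases (h S hSne).2 r with hr1 | hr2
      · have hmS : m ∈ S := Submodule.mem_span_singleton_self m
        rw [← hr1] at hmS
        obtain ⟨n, hn, heq⟩ := hmS
        obtain ⟨c, rfl⟩ := Submodule.mem_span_singleton.mp hn
        simp only [DistribSMul.toLinearMap_apply] at heq
        have hsq : (r * r) • m ∈ K := hm (r * r) (by rw [pow_two]; exact Ideal.mul_mem_mul hr hr)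
        have : r • m = c • ((r * r) • m) := by
          conv_lhs => rw [← heq]
          rw [smul_comm r c, smul_comm r c, mul_smul]
        rw [this]
        exact K.smul_mem c hsq
      · have : r • m ∈ r • S :=
          Submodule.smul_mem_pointwise_smul m r S (Submodule.mem_span_singleton_self m)
        rw [hr2, Submodule.mem_bot] at this
        rw [this]; exact K.zero_mem
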